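/- Let d be a positive natural number, let H : Matrix (Fin d) (Fin d) ℂ satisfy H * H = 1 and Hᴴ = H, and let O : Matrix (Fin d) (Fin d) ℂ be arbitrary. For θ ∈ ℝ define U(θ) := (Real.cos θ : ℂ) • 1 − (Complex.I * (Real.sin θ : ℂ)) • H and M(θ) := U(θ)ᴴ * O * U(θ). Let s ∈ ℝ satisfy sin(2·s) ≠ 0. Then the matrix-valued function θ ↦ M(θ) is differentiable and for every θ its derivative equals the exact symmetric shift quotient: M'(θ) = ((Real.sin (2·s))⁻¹ : ℂ) • (M(θ + s) − M(θ − s)). -/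

import Mathlib

open scoped Matrix

attribute [local instance] Matrix.frobeniusSeminormedAddCommGroup
  Matrix.frobeniusNormedAddCommGroup Matrix.frobeniusNormedSpace

/-- exact parameter-shift rule for a rotation-like gate
`U(θ) = cos(θ)𝟙 − i sin(θ)H` (= `e^{−iθH}`) with Hermitian `H`, `H² = 𝟙`:
the conjugated observable `M(θ) = U(θ)ᴴ O U(θ)` is differentiable in `θ`, with
derivative exactly `(sin 2s)⁻¹ • (M(θ+s) − M(θ−s))` for any shift `s` with
`sin 2s ≠ 0`. -/
theorem exact_parameter_shift_rule
    (d : ℕ) (hd : 0 < d) (H O : Matrix (Fin d) (Fin d) ℂ)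
    (hH2 : H * H = 1) (hHerm : Hᴴ = H)
    (M : ℝ → Matrix (Fin d) (Fin d) ℂ)
    (hM : ∀ θ : ℝ, M θ =
      ((Real.cos θ : ℂ) • (1 : Matrix (Fin d) (Fin d) ℂ)
          - (Complex.I * (Real.sin θ : ℂ)) • H)ᴴ * O *
        ((Real.cos θ : ℂ) • (1 : Matrix (Fin d) (Fin d) ℂ)
          - (Complex.I * (Real.sin θ : ℂ)) • H))
    (s : ℝ) (hs : Real.sin (2 * s) ≠ 0) :
    ∀ θ : ℝ, HasDerivAt M ((((Real.sin (2 * s))⁻¹ : ℝ) : ℂ) • (M (θ + s) - M (θ - s))) θ := by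
  have key : ∀ φ : ℝ, M φ =
      ((Real.cos φ ^ 2 : ℝ) : ℂ) • O
      + ((Real.sin φ * Real.cos φ : ℝ) : ℂ) • (Complex.I • (H * O - O * H))
      + ((Real.sin φ ^ 2 : ℝ) : ℂ) • (H * O * H) := by
    intro φ
    rw [hM]
    simp only [Matrix.conjTranspose_sub, Matrix.conjTranspose_smul, Matrix.conjTranspose_one,
      hHerm, map_mul, Complex.conj_I, Complex.conj_ofReal, sub_mul, mul_sub,
      Matrix.smul_mul, Matrix.mul_smul, Matrix.one_mul, Matrix.mul_one, smul_smul, smul_sub,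
      Complex.star_def, Complex.conj_I, Complex.conj_ofReal]
    match_scalars
    · ring
    · ring
    · ring
    · linear_combination (-(Complex.sin (φ:ℂ) ^ 2)) * Complex.I_sq
  have hfun : M = fun φ : ℝ =>
      ((Real.cos φ ^ 2 : ℝ) : ℂ) • O
      + ((Real.sin φ * Real.cos φ : ℝ) : ℂ) • (Complex.I • (H * O - O * H))
      + ((Real.sin φ ^ 2 : ℝ) : ℂ) • (H * O * H) := funext key
  intro θ
  have h1 : HasDerivAt (fun φ : ℝ => ((Real.cos φ ^ 2 : ℝ) : ℂ))
      ((-(2 * Real.sin θ * Real.cos θ) : ℝ) : ℂ) θ := by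
    have := ((Real.hasDerivAt_cos θ).pow 2).ofReal_comp
    convert this using 1
    · funext y; simp
    push_cast
    ring
  have h2 : HasDerivAt (fun φ : ℝ => ((Real.sin φ * Real.cos φ : ℝ) : ℂ))
      ((Real.cos θ ^ 2 - Real.sin θ ^ 2 : ℝ) : ℂ) θ := by
    have := ((Real.hasDerivAt_sin θ).mul (Real.hasDerivAt_cos θ)).ofReal_comp
    convert this using 1
    · funext y; simp
    push_cast
    ring
  have h3 : HasDerivAt (fun φ : ℝ => ((Real.sin φ ^ 2 : ℝ) : ℂ))
      ((2 * Real.sin θ * Real.cos θ : ℝ) : ℂ) θ := by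
    have := ((Real.hasDerivAt_sin θ).pow 2).ofReal_comp
    convert this using 1
    · funext y; simp
    push_cast
    ring
  have hDM : HasDerivAt M
      (((-(2 * Real.sin θ * Real.cos θ) : ℝ) : ℂ) • O
        + ((Real.cos θ ^ 2 - Real.sin θ ^ 2 : ℝ) : ℂ) • (Complex.I • (H * O - O * H))
        + ((2 * Real.sin θ * Real.cos θ : ℝ) : ℂ) • (H * O * H)) θ := by
    rw [hfun]
    exact ((h1.smul_const O).add
      (h2.smul_const (Complex.I • (H * O - O * H)))).add (h3.smul_const (H * O * H))
  convert hDM using 1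
  rw [key (θ + s), key (θ - s)]
  have hs' : Complex.sin (2 * (s : ℂ)) ≠ 0 := by
    have : ((Real.sin (2 * s) : ℝ) : ℂ) ≠ 0 := Complex.ofReal_ne_zero.mpr hs
    push_cast at this
    exact this
  rw [Complex.sin_two_mul] at hs'
  have hcs : Complex.cos (s : ℂ) ≠ 0 := right_ne_zero_of_mul hs'
  have hsn : Complex.sin (s : ℂ) ≠ 0 := right_ne_zero_of_mul (left_ne_zero_of_mul hs')
  match_scalars <;>
  · push_cast
    simp only [Complex.cos_add, Complex.cos_sub, Complex.sin_add, Complex.sin_sub, Complex.sin_two_mul]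
    field_simp
    ring
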